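/- Let E be a finite-dimensional real inner product space, let g : E → ℝ be differentiable and strongly convex with constant μ > 0 (i.e., g(y) ≥ g(x) + ⟪∇g(x), y - x⟫ + μ‖y - x‖² for all x, y), let h : E → ℝ be convex and differentiable, and set f = g - h. Let (x_k)_{k≥0} be a sequence in E such that for every k, x_{k+1} is a global minimizer of x ↦ g(x) - ⟪∇h(x_k), x - x_k⟫. Then for all natural numbers m ≤ k, f(x_m) - f(x_{k+1}) ≥ μ ∑_{i=m}^{k} ‖x_{i+1} - x_i‖². -/

import Mathlib

open RealInnerProductSpace

section aux

variable {E : Type*} [NormedAddCommGroup E] [InnerProductSpace ℝ E] [FiniteDimensional ℝ E]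

/-- Gradient inequality for a differentiable convex function. -/
lemma convex_gradient_ineq (h : E → ℝ) (hh : Differentiable ℝ h)
    (hconv : ConvexOn ℝ Set.univ h) (a b : E) :
    h a + ⟪gradient h a, b - a⟫ ≤ h b := by
  set v := b - a with hv
  set φ : ℝ → ℝ := fun t => h (a + t • v) with hφ
  have hder : ∀ t : ℝ, HasDerivAt φ ⟪gradient h (a + t • v), v⟫ t := by
    intro t
    have hcurve : HasDerivAt (fun t : ℝ => a + t • v) v t := by
      simpa using ((hasDerivAt_id t).smul_const v).const_add a
    have hgrad := (hh (a + t • v)).hasGradientAt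
    have hfd : HasFDerivAt h (InnerProductSpace.toDualMap ℝ E (gradient h (a + t • v))) (a + t • v) :=
      (hasGradientAt_iff_hasFDerivAt).mp hgrad
    have := hfd.comp_hasDerivAt t hcurve
    simpa [InnerProductSpace.toDualMap_apply_apply, Function.comp_def, φ] using this
  have hφconv : ConvexOn ℝ Set.univ φ := by
    have := hconv.comp_affineMap (AffineMap.lineMap a b : ℝ →ᵃ[ℝ] E)
    have heq : φ = h ∘ (AffineMap.lineMap a b : ℝ →ᵃ[ℝ] E) := by
      funext t
      simp [φ, AffineMap.lineMap_apply, hv]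
      rw [add_comm]
    rw [heq]
    simpa [Set.preimage_univ] using this
  have hslope := hφconv.le_slope_of_hasDerivAt (Set.mem_univ (0 : ℝ)) (Set.mem_univ (1 : ℝ))
    one_pos (by simpa using hder 0)
  have : ⟪gradient h a, v⟫ ≤ φ 1 - φ 0 := by
    simpa [slope_def_field] using hslope
  have hφ1 : φ 1 = h b := by simp [φ, hv]
  have hφ0 : φ 0 = h a := by simp [φ]
  rw [hφ1, hφ0] at this
  linarith

/-- At a global minimizer of `y ↦ g y - ⟪c, y - w⟫`, the gradient of `g` equals `c`. -/
lemma gradient_eq_of_min (g : E → ℝ) (hg : Differentiable ℝ g) (c w z : E)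
    (hmin : ∀ y : E, g z - ⟪c, z - w⟫ ≤ g y - ⟪c, y - w⟫) :
    gradient g z = c := by
  set ψ : E → ℝ := fun y => g y - ⟪c, y - w⟫ with hψ
  have hfdψ : HasFDerivAt ψ
      ((InnerProductSpace.toDualMap ℝ E (gradient g z) : E →L[ℝ] ℝ)
        - (InnerProductSpace.toDualMap ℝ E c : E →L[ℝ] ℝ)) z := by
    have h1 : HasFDerivAt g (InnerProductSpace.toDualMap ℝ E (gradient g z) : E →L[ℝ] ℝ) z :=
      (hasGradientAt_iff_hasFDerivAt).mp (hg z).hasGradientAt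
    have h2 : HasFDerivAt (fun y : E => ⟪c, y - w⟫)
        (InnerProductSpace.toDualMap ℝ E c : E →L[ℝ] ℝ) z := by
      have : HasFDerivAt (fun y : E => (InnerProductSpace.toDualMap ℝ E c : E →L[ℝ] ℝ) (y - w))
          (InnerProductSpace.toDualMap ℝ E c : E →L[ℝ] ℝ) z := by
        simpa [Function.comp_def] using ((InnerProductSpace.toDualMap ℝ E c : E →L[ℝ] ℝ).hasFDerivAt.comp z
          ((hasFDerivAt_id z).sub_const w))
      simpa [InnerProductSpace.toDualMap_apply_apply] using this
    exact h1.sub h2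
  have hlocmin : IsLocalMin ψ z := by
    apply IsMinOn.isLocalMin _ (Filter.univ_mem)
    intro y _
    exact hmin y
  have hzero := hlocmin.hasFDerivAt_eq_zero hfdψ
  have : (InnerProductSpace.toDualMap ℝ E (gradient g z) : E →L[ℝ] ℝ)
      = (InnerProductSpace.toDualMap ℝ E c : E →L[ℝ] ℝ) := by
    rwa [sub_eq_zero] at hzero
  exact (InnerProductSpace.toDualMap ℝ E).injective this

end aux

/-- Telescoped sufficient decrease of the DCA: for all `m ≤ k`,
`f (x m) - f (x (k+1)) ≥ μ * ∑_{i=m}^{k} ‖x (i+1) - x i‖²` where `f = g - h`. -/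
theorem dca_telescoped_decrease
    {E : Type*} [NormedAddCommGroup E] [InnerProductSpace ℝ E] [FiniteDimensional ℝ E]
    (g h : E → ℝ) (μ : ℝ) (hμ : 0 < μ)
    (hg : Differentiable ℝ g)
    (hsc : ∀ x y : E, g y ≥ g x + ⟪gradient g x, y - x⟫ + μ * ‖y - x‖ ^ 2)
    (hh : Differentiable ℝ h) (hconv : ConvexOn ℝ Set.univ h)
    (x : ℕ → E)
    (hmin : ∀ k : ℕ, ∀ y : E,
      g (x (k + 1)) - ⟪gradient h (x k), x (k + 1) - x k⟫ ≤
        g y - ⟪gradient h (x k), y - x k⟫) :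
    ∀ m k : ℕ, m ≤ k →
      (g (x m) - h (x m)) - (g (x (k + 1)) - h (x (k + 1))) ≥
        μ * ∑ i ∈ Finset.Icc m k, ‖x (i + 1) - x i‖ ^ 2 := by
  -- one-step decrease
  have step : ∀ k : ℕ,
      (g (x k) - h (x k)) - (g (x (k+1)) - h (x (k+1))) ≥ μ * ‖x (k+1) - x k‖ ^ 2 := by
    intro k
    have hgrad : gradient g (x (k+1)) = gradient h (x k) :=
      gradient_eq_of_min g hg (gradient h (x k)) (x k) (x (k+1)) (hmin k)
    have h1 := hsc (x (k+1)) (x k)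
    rw [hgrad] at h1
    have h2 := convex_gradient_ineq h hh hconv (x k) (x (k+1))
    have hinner : ⟪gradient h (x k), x k - x (k+1)⟫ = -⟪gradient h (x k), x (k+1) - x k⟫ := by
      rw [← inner_neg_right, neg_sub]
    have hnorm : ‖x k - x (k+1)‖ = ‖x (k+1) - x k‖ := norm_sub_rev _ _
    rw [hinner, hnorm] at h1
    linarith
  intro m k hmk
  induction k with
  | zero =>
    interval_cases m
    simpa using step 0
  | succ n ih =>
    rcases Nat.lt_or_ge m (n+1) with hlt | hge
    · have hmn : m ≤ n := Nat.lt_succ_iff.mp hlt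
      have h1 := ih hmn
      have h2 := step (n+1)
      rw [Finset.sum_Icc_succ_top (by omega : m ≤ n + 1)]
      rw [mul_add]
      linarith
    · have : m = n + 1 := le_antisymm hmk hge
      subst this
      simpa using step (n+1)
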